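/- arXiv:2511.11862 — 4 statements merged into one kernel-verified Lean document; each statement's English description precedes it below -/
import Mathlib

section
/- Let μ ≥ 0 and Y ~ Poisson(μ). Then for every integer c ≥ 0, E[Y · 1{Y ≥ c + 1}] = μ · P(Y ≥ c). Consequently, if Y₁,…,Y_n are independent with Y_i ~ Poisson(μ_i), K_i ∈ ℝ are costs, and d_i ≥ 0 are integer thresholds, then E[(1/n) Σ_{i=1}^n ( Y_i · 1{Y_i ≥ d_i + 1} − K_i · 1{Y_i ≥ d_i} )] = (1/n) Σ_{i=1}^n (μ_i − K_i) · P(Y_i ≥ d_i); that is, the Poisson ASSURE estimator is an unbiased estimator of the compound welfare (1/n) Σ_i (μ_i − K_i) P(Y_i ≥ d_i). -/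
open MeasureTheory

/-- Poisson probability mass function with mean `μ`. -/
noncomputable def poisP (μ : ℝ) (k : ℕ) : ℝ := Real.exp (-μ) * μ ^ k / (Nat.factorial k)

lemma poisP_nonneg {μ : ℝ} (hμ : 0 ≤ μ) (k : ℕ) : 0 ≤ poisP μ k := by
  unfold poisP; positivity

lemma hasSum_poisP {μ : ℝ} : HasSum (poisP μ) 1 := by
  have h : HasSum (fun k : ℕ => μ ^ k / (Nat.factorial k)) (Real.exp μ) := by
    rw [Real.exp_eq_exp_ℝ]
    exact NormedSpace.expSeries_div_hasSum_exp μ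
  have h2 := h.mul_left (Real.exp (-μ))
  have he : poisP μ = fun k => Real.exp (-μ) * (μ ^ k / (Nat.factorial k)) := by
    funext k; unfold poisP; rw [mul_div_assoc]
  rw [he]
  simpa [← Real.exp_add] using h2

lemma poisP_succ_mul (μ : ℝ) (k : ℕ) :
    poisP μ (k + 1) * ((k : ℝ) + 1) = μ * poisP μ k := by
  unfold poisP
  have hfac : ((Nat.factorial (k + 1) : ℝ)) = ((k : ℝ) + 1) * (Nat.factorial k : ℝ) := by
    push_cast [Nat.factorial_succ]; ring
  rw [hfac]
  have hk1 : ((k : ℝ) + 1) ≠ 0 := by positivity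
  have hf : ((Nat.factorial k : ℝ)) ≠ 0 := by
    exact_mod_cast Nat.factorial_ne_zero k
  field_simp
  ring

lemma summable_ind {μ : ℝ} (hμ : 0 ≤ μ) (c : ℕ) :
    Summable (fun k : ℕ => poisP μ k * (if c ≤ k then 1 else 0)) := by
  refine Summable.of_nonneg_of_le (fun k => ?_) (fun k => ?_)
    (hasSum_poisP (μ := μ)).summable
  · exact mul_nonneg (poisP_nonneg hμ k) (by split <;> norm_num)
  · calc poisP μ k * (if c ≤ k then 1 else 0) ≤ poisP μ k * 1 := by
          refine mul_le_mul_of_nonneg_left ?_ (poisP_nonneg hμ k)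
          split <;> norm_num
       _ = poisP μ k := mul_one _

lemma hasSum_part1 {μ : ℝ} (hμ : 0 ≤ μ) (c : ℕ) :
    HasSum (fun k : ℕ => poisP μ k * ((k : ℝ) * (if c + 1 ≤ k then 1 else 0)))
      (μ * ∑' k : ℕ, poisP μ k * (if c ≤ k then 1 else 0)) := by
  set f : ℕ → ℝ := fun k => poisP μ k * ((k : ℝ) * (if c + 1 ≤ k then 1 else 0)) with hf
  have hT := ((summable_ind hμ c).hasSum.mul_left μ)
  have hshift : (fun k : ℕ => f (k + 1))
      = fun k : ℕ => μ * (poisP μ k * (if c ≤ k then 1 else 0)) := by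
    funext k
    have hpm := poisP_succ_mul μ k
    simp only [hf]
    push_cast
    by_cases hck : c ≤ k <;> simp [hck] <;> nlinarith [hpm]
  have h2 : HasSum (fun k : ℕ => f (k + 1))
      ((μ * ∑' k : ℕ, poisP μ k * (if c ≤ k then 1 else 0)) - ∑ i ∈ Finset.range 1, f i) := by
    rw [hshift]
    have h0 : ∑ i ∈ Finset.range 1, f i = 0 := by simp [hf]
    rw [h0, sub_zero]
    exact hT
  exact (hasSum_nat_add_iff' 1).mp h2

set_option maxHeartbeats 1000000 in
lemma hasSum_pi_prod : ∀ {n : ℕ} (q : Fin n → ℕ → ℝ) (_ : ∀ j k, 0 ≤ q j k)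
    (t : Fin n → ℝ) (_ : ∀ j, HasSum (q j) (t j)),
    HasSum (fun y : Fin n → ℕ => ∏ j, q j (y j)) (∏ j, t j) := by
  intro n
  induction n with
  | zero =>
    intro q _ t _
    simp only [Finset.univ_eq_empty, Finset.prod_empty]
    exact hasSum_single (default : Fin 0 → ℕ)
      (fun b' hb' => absurd (Subsingleton.elim b' default) hb')
  | succ n ih =>
    intro q hq t ht
    have h1 := ht 0
    have h2 : HasSum (fun y : Fin n → ℕ => ∏ j : Fin n, q j.succ (y j))
        (∏ j : Fin n, t j.succ) :=
      ih (fun j => q j.succ) (fun j k => hq j.succ k) (fun j => t j.succ)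
        (fun j => ht j.succ)
    have hsum : Summable (fun x : ℕ × (Fin n → ℕ) =>
        q 0 x.1 * ∏ j : Fin n, q j.succ (x.2 j)) := by
      have hs := h1.summable.mul_of_nonneg h2.summable
        (fun k => hq 0 k) (fun y => Finset.prod_nonneg fun j _ => hq j.succ (y j))
      exact hs
    have key := h1.mul h2 hsum
    have hfe : ((fun y : Fin (n+1) → ℕ => ∏ j, q j (y j)) ∘ ⇑(Fin.consEquiv fun _ => ℕ))
        = fun x : ℕ × (Fin n → ℕ) => q 0 x.1 * ∏ j : Fin n, q j.succ (x.2 j) := by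
      funext x
      simp [Fin.consEquiv, Fin.prod_univ_succ]
    rw [Fin.prod_univ_succ, ← Equiv.hasSum_iff (Fin.consEquiv fun _ => ℕ), hfe]
    exact key

lemma hasSum_pi_factor {n : ℕ} (p : Fin n → ℕ → ℝ) (hp : ∀ j k, 0 ≤ p j k)
    (h1 : ∀ j, HasSum (p j) 1) (i : Fin n) (h : ℕ → ℝ) (hh : ∀ k, 0 ≤ h k)
    {s : ℝ} (hs : HasSum (fun k => p i k * h k) s) :
    HasSum (fun y : Fin n → ℕ => (∏ j, p j (y j)) * h (y i)) s := by
  have key := hasSum_pi_prod (fun j k => p j k * (if j = i then h k else 1))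
    (fun j k => by
      by_cases hji : j = i
      · subst hji; simp only [if_pos rfl]; exact mul_nonneg (hp j k) (hh k)
      · simp [hji, hp j k])
    (fun j => if j = i then s else 1)
    (fun j => by
      by_cases hji : j = i
      · subst hji; simpa using hs
      · simpa [hji] using h1 j)
  have e1 : ∀ y : Fin n → ℕ, (∏ j, p j (y j) * (if j = i then h (y j) else 1))
      = (∏ j, p j (y j)) * h (y i) := by
    intro y
    rw [Finset.prod_mul_distrib, Finset.prod_ite_eq' Finset.univ i (fun j => h (y j))]
    simp
  have e2 : (∏ j : Fin n, (if j = i then s else 1)) = s := by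
    rw [Finset.prod_ite_eq' Finset.univ i (fun _ => s)]; simp
  convert key using 1
  · funext y; exact (e1 y).symm
  · exact e2.symm

/-- the Poisson identity `E[Y·1{Y ≥ c+1}] = μ·P(Y ≥ c)` and unbiasedness
of the Poisson ASSURE estimator for the compound welfare. -/
theorem poisson_assure_unbiased :
    (∀ μ : ℝ, 0 ≤ μ → ∀ c : ℕ,
        (∑' k : ℕ, poisP μ k * ((k : ℝ) * (if c + 1 ≤ k then 1 else 0)))
          = μ * ∑' k : ℕ, poisP μ k * (if c ≤ k then 1 else 0)) ∧
    (∀ n : ℕ, 1 ≤ n → ∀ μ : Fin n → ℝ, (∀ i, 0 ≤ μ i) →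
      ∀ K : Fin n → ℝ, ∀ d : Fin n → ℕ,
        (∑' y : Fin n → ℕ, (∏ j, poisP (μ j) (y j)) *
            ((1 / (n:ℝ)) * ∑ i, ((y i : ℝ) * (if d i + 1 ≤ y i then 1 else 0)
              - K i * (if d i ≤ y i then 1 else 0))))
          = (1 / (n:ℝ)) * ∑ i, (μ i - K i) *
              (∑' k : ℕ, poisP (μ i) k * (if d i ≤ k then 1 else 0))) := by
  constructor
  · intro μ hμ c
    exact (hasSum_part1 hμ c).tsum_eq
  · intro n _ μ hμ K d
    set T : Fin n → ℝ := fun i => ∑' k : ℕ, poisP (μ i) k * (if d i ≤ k then 1 else 0)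
      with hT
    have hp : ∀ (j : Fin n) (k : ℕ), 0 ≤ poisP (μ j) k := fun j k => poisP_nonneg (hμ j) k
    have h1 : ∀ j : Fin n, HasSum (poisP (μ j)) 1 := fun j => hasSum_poisP
    have hA : ∀ i : Fin n, HasSum (fun y : Fin n → ℕ => (∏ j, poisP (μ j) (y j)) *
        ((y i : ℝ) * (if d i + 1 ≤ y i then 1 else 0))) (μ i * T i) :=
      fun i => hasSum_pi_factor (fun j => poisP (μ j)) hp h1 i
        (fun k => (k : ℝ) * (if d i + 1 ≤ k then 1 else 0))
        (fun k => mul_nonneg (Nat.cast_nonneg k) (by split <;> norm_num))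
        (hasSum_part1 (hμ i) (d i))
    have hB : ∀ i : Fin n, HasSum (fun y : Fin n → ℕ => (∏ j, poisP (μ j) (y j)) *
        (if d i ≤ y i then 1 else 0)) (T i) :=
      fun i => hasSum_pi_factor (fun j => poisP (μ j)) hp h1 i
        (fun k => (if d i ≤ k then 1 else 0))
        (fun k => by split <;> norm_num)
        (summable_ind (hμ i) (d i)).hasSum
    have hC : ∀ i : Fin n, HasSum (fun y : Fin n → ℕ => (∏ j, poisP (μ j) (y j)) *
        ((y i : ℝ) * (if d i + 1 ≤ y i then 1 else 0)
          - K i * (if d i ≤ y i then 1 else 0))) ((μ i - K i) * T i) := by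
      intro i
      have := (hA i).sub ((hB i).mul_left (K i))
      have heq : (fun y : Fin n → ℕ => (∏ j, poisP (μ j) (y j)) *
          ((y i : ℝ) * (if d i + 1 ≤ y i then 1 else 0)
            - K i * (if d i ≤ y i then 1 else 0)))
          = fun y : Fin n → ℕ => (∏ j, poisP (μ j) (y j)) *
              ((y i : ℝ) * (if d i + 1 ≤ y i then 1 else 0))
            - K i * ((∏ j, poisP (μ j) (y j)) * (if d i ≤ y i then 1 else 0)) := by
        funext y; ring
      rw [heq]
      have hval : (μ i - K i) * T i = μ i * T i - K i * T i := by ring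
      rw [hval]
      exact this
    have hS : HasSum (fun y : Fin n → ℕ => ∑ i, ((∏ j, poisP (μ j) (y j)) *
        ((y i : ℝ) * (if d i + 1 ≤ y i then 1 else 0)
          - K i * (if d i ≤ y i then 1 else 0)))) (∑ i, (μ i - K i) * T i) :=
      hasSum_sum fun i _ => hC i
    have hfinal := hS.mul_left (1 / (n : ℝ))
    have hfun : (fun y : Fin n → ℕ => (1 / (n:ℝ)) * ∑ i, ((∏ j, poisP (μ j) (y j)) *
        ((y i : ℝ) * (if d i + 1 ≤ y i then 1 else 0)
          - K i * (if d i ≤ y i then 1 else 0))))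
        = fun y : Fin n → ℕ => (∏ j, poisP (μ j) (y j)) *
            ((1 / (n:ℝ)) * ∑ i, ((y i : ℝ) * (if d i + 1 ≤ y i then 1 else 0)
              - K i * (if d i ≤ y i then 1 else 0))) := by
      funext y
      simp only [Finset.mul_sum]
      refine Finset.sum_congr rfl fun i _ => by ring
    rw [hfun] at hfinal
    exact hfinal.tsum_eq
end

section
/- Let φ(w) = (2π)^{−1/2} e^{−w²/2}, regarded also as an entire function on ℂ. Let f : ℝ → ℝ be measurable with ∫_ℝ |f(y)| φ(y − x) dy < ∞ for every x ∈ ℝ, and suppose the function m : ℂ → ℂ defined by m(z) = ∫_ℝ f(y) φ(y − z) dy is well defined and entire. Then there exists μ ∈ ℝ such that ∫_ℝ f(y) φ(y − μ) dy ≠ φ(μ); that is, no such f is an unbiased estimator of the Gaussian density value φ(μ) under Y ~ N(μ, 1) simultaneously for all μ ∈ ℝ. -/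
open MeasureTheory

/-- standard normal density -/
noncomputable def phiR (x : ℝ) : ℝ := (Real.sqrt (2 * Real.pi))⁻¹ * Real.exp (-(x ^ 2) / 2)

/-- standard normal density, extended to the complex plane -/
noncomputable def cphiR (z : ℂ) : ℂ :=
  (Real.sqrt (2 * Real.pi) : ℂ)⁻¹ * Complex.exp (-(z ^ 2) / 2)

lemma cphiR_ofReal (w : ℝ) : cphiR (w : ℂ) = ((phiR w : ℝ) : ℂ) := by
  simp only [cphiR, phiR]
  push_cast [Complex.ofReal_exp]
  ring_nf

lemma cphiR_diff : Differentiable ℂ cphiR := by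
  unfold cphiR
  exact Differentiable.const_mul (Complex.differentiable_exp.comp (by fun_prop)) _

/-- Stefanski: no `f` whose Gaussian smoothing is entire can be an
unbiased estimator of `φ(μ)` under `Y ~ N(μ, 1)` for all `μ`. -/
theorem no_unbiased_estimator_of_density (f : ℝ → ℝ) (hf : Measurable f)
    (hint : ∀ x : ℝ, Integrable (fun y : ℝ => |f y| * phiR (y - x)))
    (m : ℂ → ℂ)
    (hm : ∀ z : ℂ, m z = ∫ y : ℝ, (f y : ℂ) * cphiR ((y : ℂ) - z))
    (hmint : ∀ z : ℂ, Integrable (fun y : ℝ => (f y : ℂ) * cphiR ((y : ℂ) - z)))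
    (hent : Differentiable ℂ m) :
    ∃ μ : ℝ, (∫ y : ℝ, f y * phiR (y - μ)) ≠ phiR μ := by
  by_contra hcon
  push_neg at hcon
  set c : ℝ := (Real.sqrt (2 * Real.pi))⁻¹ with hc
  have hcpos : 0 < c := by
    rw [hc]
    positivity
  -- m agrees with cphiR on ℝ
  have hreal : ∀ x : ℝ, m (x : ℂ) = cphiR (x : ℂ) := by
    intro x
    rw [hm, cphiR_ofReal]
    have h2 : ∀ y : ℝ, (f y : ℂ) * cphiR ((y : ℂ) - (x : ℂ)) = ((f y * phiR (y - x) : ℝ) : ℂ) := by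
      intro y
      rw [← Complex.ofReal_sub, cphiR_ofReal]
      push_cast
      ring
    rw [show (∫ y : ℝ, (f y : ℂ) * cphiR ((y : ℂ) - (x : ℂ)))
        = ∫ y : ℝ, ((f y * phiR (y - x) : ℝ) : ℂ) from by simp_rw [h2]]
    rw [← hcon x]
    exact integral_ofReal
  -- identity theorem: m = cphiR on ℂ
  have heq : ∀ z : ℂ, m z = cphiR z := by
    have hma : AnalyticOnNhd ℂ m Set.univ :=
      hent.differentiableOn.analyticOnNhd isOpen_univ
    have hca : AnalyticOnNhd ℂ cphiR Set.univ :=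
      cphiR_diff.differentiableOn.analyticOnNhd isOpen_univ
    have hfreq : ∃ᶠ z in nhdsWithin (0 : ℂ) {(0 : ℂ)}ᶜ, m z = cphiR z := by
      have htend : Filter.Tendsto (fun n : ℕ => ((1 / (n + 1) : ℝ) : ℂ)) Filter.atTop
          (nhdsWithin (0 : ℂ) {(0 : ℂ)}ᶜ) := by
        rw [tendsto_nhdsWithin_iff]
        constructor
        · have h3 : Filter.Tendsto (fun n : ℕ => (1 / (n + 1) : ℝ)) Filter.atTop (nhds 0) :=
            tendsto_one_div_add_atTop_nhds_zero_nat
          have := (Complex.continuous_ofReal.tendsto 0).comp h3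
          simpa [Function.comp_def] using this
        · filter_upwards with n
          simp only [Set.mem_compl_iff, Set.mem_singleton_iff]
          intro h
          rw [Complex.ofReal_eq_zero] at h
          have hpos : (0 : ℝ) < 1 / (n + 1) := by positivity
          exact hpos.ne' h
      exact htend.frequently (Filter.Frequently.of_forall fun n => hreal _)
    intro z
    exact AnalyticOnNhd.eqOn_of_preconnected_of_frequently_eq hma hca
      isPreconnected_univ (Set.mem_univ 0) hfreq (Set.mem_univ z)
  -- evaluate along the imaginary axis
  set g : ℝ → ℂ := fun y => (f y : ℂ) * (phiR y : ℂ) with hg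
  have hkey : ∀ t : ℝ,
      (∫ y : ℝ, Complex.exp ((y : ℂ) * (t : ℂ) * Complex.I) * g y) = (c : ℂ) := by
    intro t
    have h1 := heq ((t : ℂ) * Complex.I)
    rw [hm] at h1
    have hexp : Complex.exp ((t : ℂ) ^ 2 / 2) ≠ 0 := Complex.exp_ne_zero _
    have hrhs : cphiR ((t : ℂ) * Complex.I) = (c : ℂ) * Complex.exp ((t : ℂ) ^ 2 / 2) := by
      simp only [cphiR, hc]
      push_cast
      congr 2
      linear_combination (-(t : ℂ) ^ 2 / 2) * Complex.I_sq
    have hlhs : ∀ y : ℝ, (f y : ℂ) * cphiR ((y : ℂ) - (t : ℂ) * Complex.I)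
        = (Complex.exp ((y : ℂ) * (t : ℂ) * Complex.I) * g y)
          * Complex.exp ((t : ℂ) ^ 2 / 2) := by
      intro y
      have h4 : cphiR ((y : ℂ) - (t : ℂ) * Complex.I)
          = cphiR (y : ℂ) * Complex.exp ((y : ℂ) * (t : ℂ) * Complex.I)
            * Complex.exp ((t : ℂ) ^ 2 / 2) := by
        simp only [cphiR]
        have harg : -((y : ℂ) - (t : ℂ) * Complex.I) ^ 2 / 2
            = -(y : ℂ) ^ 2 / 2 + ((y : ℂ) * (t : ℂ) * Complex.I + (t : ℂ) ^ 2 / 2) := by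
          linear_combination (-(t : ℂ) ^ 2 / 2) * Complex.I_sq
        rw [harg, Complex.exp_add, Complex.exp_add]
        ring
      rw [h4, cphiR_ofReal, hg]
      push_cast
      ring
    rw [hrhs] at h1
    simp_rw [hlhs] at h1
    rw [integral_mul_const] at h1
    exact mul_right_cancel₀ hexp h1
  -- Riemann-Lebesgue contradiction
  have hRL := Real.tendsto_integral_exp_smul_cocompact g
  have hmap : Filter.Tendsto (fun t : ℝ => -t / (2 * Real.pi)) (Filter.cocompact ℝ)
      (Filter.cocompact ℝ) := by
    have h2 : (fun t : ℝ => -t / (2 * Real.pi)) = fun t => (-(2 * Real.pi)⁻¹) * t := by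
      funext t; field_simp
    rw [h2]
    apply Filter.tendsto_cocompact_mul_left₀
    simp [Real.pi_ne_zero]
  have hRL2 := hRL.comp hmap
  have hconst : (fun t : ℝ => ∫ v : ℝ, Real.fourierChar (-(v * (-t / (2 * Real.pi)))) • g v)
      = fun _ : ℝ => (c : ℂ) := by
    funext t
    have h5 : ∀ v : ℝ, Real.fourierChar (-(v * (-t / (2 * Real.pi)))) • g v
        = Complex.exp ((v : ℂ) * (t : ℂ) * Complex.I) * g v := by
      intro v
      rw [Circle.smul_def, Real.fourierChar_apply]
      congr 2
      push_cast
      have hpi : (Real.pi : ℂ) ≠ 0 := by exact_mod_cast Real.pi_ne_zero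
      field_simp
    simp_rw [h5]
    exact hkey t
  rw [show ((fun w : ℝ => ∫ v : ℝ, Real.fourierChar (-(v * w)) • g v) ∘
      fun t : ℝ => -t / (2 * Real.pi)) = fun t : ℝ =>
      ∫ v : ℝ, Real.fourierChar (-(v * (-t / (2 * Real.pi)))) • g v from rfl, hconst] at hRL2
  have hzero : (0 : ℂ) = (c : ℂ) := tendsto_nhds_unique hRL2 tendsto_const_nhds
  exact hcpos.ne' (by exact_mod_cast hzero.symm)
end

section
/- Let Y ~ N(μ, σ²), and let K, δ ∈ ℝ and ε > 0. Then E[ (Y − K)·Φ((Y − δ)/(εσ)) − (σ/ε)·φ((Y − δ)/(εσ)) ] = (μ − K)·Φ( (μ − δ)/(σ√(1 + ε²)) ). That is, the coupled-bootstrap summand is an unbiased estimator of the noise-inflated welfare (μ − K)·P(Ỹ ≥ δ) where Ỹ ~ N(μ, (1 + ε²)σ²). -/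
open MeasureTheory ProbabilityTheory

/-- standard normal CDF -/
noncomputable def PhiR (x : ℝ) : ℝ := ∫ t in Set.Iic x, phiR t

open Real Filter Set
open scoped NNReal ENNReal

noncomputable def gd (m a x : ℝ) : ℝ :=
  (Real.sqrt (2 * Real.pi * a))⁻¹ * Real.exp (-(x - m)^2 / (2*a))

lemma gd_eq (m : ℝ) {a : ℝ} (ha : 0 ≤ a) : gaussianPDFReal m a.toNNReal = gd m a := by
  ext x; simp [gaussianPDFReal, gd, Real.coe_toNNReal a ha]

lemma phiR_eq : phiR = gd 0 1 := by
  ext x; simp [phiR, gd]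

lemma gd_integrable (m : ℝ) {a : ℝ} (ha : 0 ≤ a) : Integrable (gd m a) := by
  rw [← gd_eq m ha]; exact integrable_gaussianPDFReal m a.toNNReal

lemma gd_integral (m : ℝ) {a : ℝ} (ha : 0 < a) : ∫ x, gd m a x = 1 := by
  rw [← gd_eq m ha.le]
  exact integral_gaussianPDFReal_eq_one m (by simp [ha, ha.not_ge])

lemma gd_nonneg (m a x : ℝ) : 0 ≤ gd m a x := by
  unfold gd; positivity

lemma gd_continuous (m a : ℝ) : Continuous (gd m a) := by
  unfold gd; fun_prop

lemma gd_le (m : ℝ) {a : ℝ} (ha : 0 < a) (x : ℝ) :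
    gd m a x ≤ (Real.sqrt (2 * Real.pi * a))⁻¹ := by
  unfold gd
  have h1 : Real.exp (-(x - m)^2 / (2*a)) ≤ 1 := by
    rw [Real.exp_le_one_iff]
    apply div_nonpos_of_nonpos_of_nonneg
    · simpa using sq_nonneg (x - m)
    · positivity
  have h2 : (0:ℝ) ≤ (Real.sqrt (2 * Real.pi * a))⁻¹ := by positivity
  nlinarith

lemma gd_mul_integrable (m : ℝ) {a : ℝ} (ha : 0 < a) {f : ℝ → ℝ}
    (hf : Integrable f) (hmeas : AEStronglyMeasurable (gd m a)) :
    Integrable (fun x => gd m a x * f x) :=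
  hf.bdd_mul (c := (Real.sqrt (2 * Real.pi * a))⁻¹) hmeas (ae_of_all _ fun x => by
    rw [Real.norm_eq_abs, abs_of_nonneg (gd_nonneg m a x)]; exact gd_le m ha x)

lemma id_gd_integrable (m : ℝ) {a : ℝ} (ha : 0 < a) :
    Integrable (fun x => (x - m) * gd m a x) := by
  have hb : (0:ℝ) < (2*a)⁻¹ := by positivity
  have h := integrable_rpow_mul_exp_neg_mul_sq hb (by norm_num : (-1:ℝ) < 1)
  have h2 : Integrable (fun x : ℝ => x * Real.exp (-((2*a)⁻¹) * x^2)) := by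
    simpa [Real.rpow_natCast] using h
  have h3 := (h2.comp_sub_right m).const_mul (Real.sqrt (2 * Real.pi * a))⁻¹
  refine h3.congr (ae_of_all _ fun x => ?_)
  unfold gd
  have he : -(x-m)^2/(2*a) = -((2*a)⁻¹) * (x-m)^2 := by ring
  simp only [he]
  ring

lemma gd_tendsto_zero (m : ℝ) {a : ℝ} (ha : 0 < a) :
    Tendsto (gd m a) atTop (nhds 0) := by
  unfold gd
  rw [show (0:ℝ) = (Real.sqrt (2 * Real.pi * a))⁻¹ * 0 by ring]
  apply Tendsto.const_mul
  apply Real.tendsto_exp_atBot.comp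
  simp only [neg_div]
  have h1 : Tendsto (fun y : ℝ => y - m) atTop atTop :=
    tendsto_atTop_add_const_right _ _ tendsto_id
  have h2 : Tendsto (fun y : ℝ => (y - m)^2) atTop atTop :=
    (tendsto_pow_atTop two_ne_zero).comp h1
  have h3 : Tendsto (fun y : ℝ => (y - m)^2 / (2*a)) atTop atTop :=
    h2.atTop_div_const (by positivity)
  exact tendsto_neg_atBot_iff.mpr h3

lemma gd_hasDerivAt (m : ℝ) {a : ℝ} (ha : 0 < a) (y : ℝ) :
    HasDerivAt (fun x => -a * gd m a x) ((y - m) * gd m a y) y := by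
  have hg : HasDerivAt (fun x : ℝ => -(x - m)^2 / (2*a)) (-(y - m)/a) y := by
    have h1 : HasDerivAt (fun x : ℝ => x - m) 1 y := (hasDerivAt_id y).sub_const m
    have h2 : HasDerivAt (fun x : ℝ => (x - m)^2) (2 * (y - m)) y := by
      simpa using h1.fun_pow 2
    have h3 := (h2.neg).div_const (2*a)
    refine h3.congr_deriv ?_
    field_simp
  have he := hg.exp
  have h4 := (he.const_mul (-a * (Real.sqrt (2 * Real.pi * a))⁻¹))
  have hfun : (fun x => -a * gd m a x)
      = fun x => -a * (Real.sqrt (2 * Real.pi * a))⁻¹ * Real.exp (-(x - m)^2 / (2*a)) := by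
    ext x; unfold gd; ring
  rw [hfun]
  refine h4.congr_deriv ?_
  unfold gd
  field_simp

lemma integral_Ici_id_gd (m : ℝ) {a : ℝ} (ha : 0 < a) (z : ℝ) :
    ∫ y in Set.Ici z, (y - m) * gd m a y = a * gd m a z := by
  rw [integral_Ici_eq_integral_Ioi]
  have hint : IntegrableOn (fun y => (y - m) * gd m a y) (Set.Ioi z) :=
    (id_gd_integrable m ha).integrableOn
  have htend : Tendsto (fun x => -a * gd m a x) atTop (nhds 0) := by
    have := (gd_tendsto_zero m ha).const_mul (-a)
    simpa using this
  have h := integral_Ioi_of_hasDerivAt_of_tendsto' (f := fun x => -a * gd m a x)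
    (fun x _ => gd_hasDerivAt m ha x) hint htend
  rw [h]; ring

lemma toNNReal_ne_zero {a : ℝ} (ha : 0 < a) : a.toNNReal ≠ 0 := by
  simp [ha, ha.not_ge]

lemma gauss_apply (m : ℝ) {a : ℝ} (ha : 0 < a) {s : Set ℝ} (hs : MeasurableSet s) :
    (gaussianReal m a.toNNReal s).toReal = ∫ x in s, gd m a x := by
  rw [gaussianReal_apply_eq_integral m (toNNReal_ne_zero ha) s, gd_eq m ha.le,
    ENNReal.toReal_ofReal]
  exact setIntegral_nonneg hs fun x _ => gd_nonneg m a x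

lemma PhiR_eq_measure (u : ℝ) : PhiR u = (gaussianReal 0 1 (Set.Iic u)).toReal := by
  have h1 : (1 : NNReal) = (1:ℝ).toNNReal := Real.toNNReal_one.symm
  rw [h1, gauss_apply 0 one_pos measurableSet_Iic, PhiR, phiR_eq]

lemma gaussianReal_affine (m s : ℝ) (hs : s ≠ 0) :
    (gaussianReal 0 1).map (fun z => s*z + m) = gaussianReal m ((s^2).toNNReal) := by
  have h1 : (fun z : ℝ => s*z + m) = (· + m) ∘ (s * ·) := rfl
  rw [h1, ← Measure.map_map (measurable_add_const m) (measurable_const_mul s),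
    gaussianReal_map_const_mul s, gaussianReal_map_add_const m]
  congr 1
  · ring
  · ext
    simp [Real.coe_toNNReal _ (sq_nonneg s)]

lemma gauss_Iic (m : ℝ) {s : ℝ} (hs : 0 < s) (x : ℝ) :
    (gaussianReal m ((s^2).toNNReal) (Set.Iic x)).toReal = PhiR ((x - m)/s) := by
  rw [← gaussianReal_affine m s hs.ne', Measure.map_apply (by fun_prop) measurableSet_Iic]
  have hpre : (fun z : ℝ => s*z + m) ⁻¹' (Set.Iic x) = Set.Iic ((x - m)/s) := by
    ext z
    simp only [Set.mem_preimage, Set.mem_Iic, le_div_iff₀ hs]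

    constructor <;> intro h <;> nlinarith
  rw [hpre, PhiR_eq_measure]

lemma gauss_Ici (m : ℝ) {s : ℝ} (hs : 0 < s) (x : ℝ) :
    (gaussianReal m ((s^2).toNNReal) (Set.Ici x)).toReal = PhiR ((m - x)/s) := by
  have hsq : (s^2 : ℝ) = (-s)^2 := by ring
  rw [hsq, ← gaussianReal_affine m (-s) (by simpa using hs.ne'),
    Measure.map_apply (by fun_prop) measurableSet_Ici]
  have hpre : (fun z : ℝ => -s*z + m) ⁻¹' (Set.Ici x) = Set.Iic ((m - x)/s) := by
    ext z
    simp only [Set.mem_preimage, Set.mem_Ici, Set.mem_Iic, le_div_iff₀ hs]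
    constructor <;> intro h <;> nlinarith
  rw [hpre, PhiR_eq_measure]

lemma gd_reflect (d b y u : ℝ) : gd d b (y - u) = gd (y - d) b u := by
  unfold gd
  congr 2
  ring

lemma PhiR_formA (d : ℝ) {s : ℝ} (hs : 0 < s) (y : ℝ) :
    PhiR ((y - d)/s) = ∫ z in Set.Iic y, gd d (s^2) z := by
  rw [← gauss_Iic d hs y, gauss_apply d (by positivity) measurableSet_Iic]

lemma PhiR_formB (d : ℝ) {s : ℝ} (hs : 0 < s) (y : ℝ) :
    PhiR ((y - d)/s) = ∫ u in Set.Ici 0, gd d (s^2) (y - u) := by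
  have h0 : ((y - d) : ℝ) = (y - d) - 0 := by ring
  calc PhiR ((y - d)/s) = PhiR (((y - d) - 0)/s) := by rw [← h0]
    _ = (gaussianReal (y - d) ((s^2).toNNReal) (Set.Ici 0)).toReal := (gauss_Ici (y - d) hs 0).symm
    _ = ∫ u in Set.Ici 0, gd (y - d) (s^2) u := gauss_apply _ (by positivity) measurableSet_Ici
    _ = ∫ u in Set.Ici 0, gd d (s^2) (y - u) := by
        refine setIntegral_congr_fun measurableSet_Ici fun u _ => ?_
        rw [gd_reflect]

lemma gd_product {a b : ℝ} (ha : 0 < a) (hb : 0 < b) (m d u y : ℝ) :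
    gd m a y * gd d b (y - u)
      = gd (m - d) (a+b) u * gd ((b*m + a*(d+u))/(a+b)) (a*b/(a+b)) y := by
  have hab : a + b ≠ 0 := by positivity
  unfold gd
  rw [mul_mul_mul_comm, mul_mul_mul_comm ((Real.sqrt (2 * Real.pi * (a+b)))⁻¹)]
  congr 1
  · rw [← mul_inv, ← mul_inv, ← Real.sqrt_mul (by positivity), ← Real.sqrt_mul (by positivity)]
    congr 1
    field_simp
  · rw [← Real.exp_add, ← Real.exp_add]
    congr 1
    field_simp
    ring

lemma gd_conv {a b : ℝ} (ha : 0 < a) (hb : 0 < b) (m d u : ℝ) :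
    ∫ y, gd m a y * gd d b (y - u) = gd (m - d) (a+b) u := by
  have hc : (0:ℝ) < a*b/(a+b) := by positivity
  simp_rw [gd_product ha hb m d u]
  rw [MeasureTheory.integral_const_mul, gd_integral _ hc, mul_one]

lemma phiR_integrable : Integrable phiR := by
  rw [phiR_eq]; exact gd_integrable 0 one_pos.le

lemma PhiR_nonneg (x : ℝ) : 0 ≤ PhiR x :=
  setIntegral_nonneg measurableSet_Iic fun t _ => by rw [phiR_eq]; exact gd_nonneg 0 1 t

lemma phiR_nonneg_ae : (0 : ℝ → ℝ) ≤ᵐ[(volume : Measure ℝ)] phiR :=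
  ae_of_all _ fun t => by
    simp only [Pi.zero_apply, phiR_eq]; exact gd_nonneg 0 1 t

lemma PhiR_le_one (x : ℝ) : PhiR x ≤ 1 := by
  unfold PhiR
  refine le_trans (setIntegral_le_integral phiR_integrable phiR_nonneg_ae) ?_
  rw [phiR_eq, gd_integral 0 one_pos]

lemma PhiR_mono : Monotone PhiR := fun u v huv =>
  setIntegral_mono_set phiR_integrable.integrableOn
    (phiR_nonneg_ae.filter_mono (ae_mono Measure.restrict_le_self))
    (HasSubset.Subset.eventuallyLE (Set.Iic_subset_Iic.mpr huv))

lemma PhiR_measurable : Measurable PhiR := PhiR_mono.measurable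

lemma integral_gaussianReal_eq {a : ℝ} (ha : 0 < a) (m : ℝ) (f : ℝ → ℝ) :
    ∫ y, f y ∂(gaussianReal m a.toNNReal) = ∫ y, gd m a y * f y := by
  rw [gaussianReal_of_var_ne_zero m (toNNReal_ne_zero ha)]
  have h1 : gaussianPDF m a.toNNReal
      = fun x => (((gaussianPDFReal m a.toNNReal x).toNNReal : ℝ≥0) : ℝ≥0∞) := by
    ext x; rw [gaussianPDF, ENNReal.ofReal]
  rw [h1, integral_withDensity_eq_integral_smul
    ((measurable_gaussianPDFReal m _).real_toNNReal) f]
  congr 1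
  ext y
  rw [NNReal.smul_def, smul_eq_mul, Real.coe_toNNReal _ (gaussianPDFReal_nonneg m _ y),
    gd_eq m ha.le]

lemma fubini_A {a b : ℝ} (ha : 0 < a) (hb : 0 < b) (m d : ℝ) :
    ∫ y, (y - m) * (∫ z in Set.Iic y, gd d b z) * gd m a y
      = a * ∫ z, gd d b z * gd m a z := by
  set f : ℝ → ℝ → ℝ := fun z y =>
    Set.indicator (Set.Ici z) (fun y' => gd d b z * ((y' - m) * gd m a y')) y with hf_def
  have hS : MeasurableSet {p : ℝ × ℝ | p.1 ≤ p.2} :=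
    measurableSet_le measurable_fst measurable_snd
  have hg : Integrable (fun p : ℝ × ℝ => gd d b p.1 * ((p.2 - m) * gd m a p.2))
      (volume.prod volume) :=
    (gd_integrable d hb.le).mul_prod (id_gd_integrable m ha)
  have huncurry : Function.uncurry f
      = Set.indicator {p : ℝ × ℝ | p.1 ≤ p.2}
          (fun p => gd d b p.1 * ((p.2 - m) * gd m a p.2)) := by
    ext p
    rw [Function.uncurry, hf_def]
    simp only [Set.indicator_apply, Set.mem_Ici, Set.mem_setOf_eq]
  have hfint : Integrable (Function.uncurry f) (volume.prod volume) := by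
    rw [huncurry]; exact hg.indicator hS
  have hswap := integral_integral_swap hfint
  have hlhs : ∀ y : ℝ, (∫ z, f z y)
      = (y - m) * (∫ z in Set.Iic y, gd d b z) * gd m a y := by
    intro y
    have : (fun z => f z y)
        = Set.indicator (Set.Iic y) (fun z => gd d b z * ((y - m) * gd m a y)) := by
      ext z
      rw [hf_def]
      simp only [Set.indicator_apply, Set.mem_Ici, Set.mem_Iic]
    rw [this, integral_indicator measurableSet_Iic, integral_mul_const]
    ring
  have hrhs : ∀ z : ℝ, (∫ y, f z y) = gd d b z * (a * gd m a z) := by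
    intro z
    rw [hf_def]
    simp only
    rw [integral_indicator measurableSet_Ici, MeasureTheory.integral_const_mul,
      integral_Ici_id_gd m ha z]
  calc ∫ y, (y - m) * (∫ z in Set.Iic y, gd d b z) * gd m a y
      = ∫ y, ∫ z, f z y := by simp_rw [hlhs]
    _ = ∫ z, ∫ y, f z y := hswap.symm
    _ = ∫ z, gd d b z * (a * gd m a z) := by simp_rw [hrhs]
    _ = a * ∫ z, gd d b z * gd m a z := by
        rw [← MeasureTheory.integral_const_mul]
        congr 1; ext z; ring

lemma gd_neg (d b t : ℝ) : gd d b (-t) = gd (-d) b t := by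
  unfold gd; congr 2; ring

lemma fubini_B {a b : ℝ} (ha : 0 < a) (hb : 0 < b) (m d : ℝ) :
    ∫ y, (∫ u in Set.Ici (0:ℝ), gd d b (y - u)) * gd m a y
      = ∫ u in Set.Ici (0:ℝ), gd (m - d) (a+b) u := by
  set f : ℝ → ℝ → ℝ := fun u y =>
    Set.indicator (Set.Ici (0:ℝ)) (fun u' => gd d b (y - u') * gd m a y) u with hf_def
  have hG : Integrable (fun p : ℝ × ℝ => gd d b (p.2 - p.1) * gd m a p.2)
      (volume.prod volume) := by
    have hK : Integrable (fun p : ℝ × ℝ => gd (-d) b p.1 * gd m a p.2)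
        (volume.prod volume) :=
      (gd_integrable (-d) hb.le).mul_prod (gd_integrable m ha.le)
    have hmp : MeasurePreserving (fun z : ℝ × ℝ => (z.1 - z.2, z.2))
        ((volume : Measure ℝ).prod volume) ((volume : Measure ℝ).prod volume) :=
      measurePreserving_sub_prod volume volume
    have hcomp := hmp.integrable_comp (hK.aestronglyMeasurable)
    have : Integrable ((fun p : ℝ × ℝ => gd (-d) b p.1 * gd m a p.2)
        ∘ (fun z : ℝ × ℝ => (z.1 - z.2, z.2)))
        (volume.prod volume) := hcomp.mpr hK
    refine this.congr (ae_of_all _ fun p => ?_)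
    simp only [Function.comp_apply]
    rw [show p.2 - p.1 = -(p.1 - p.2) by ring, gd_neg]
  have hfint : Integrable (Function.uncurry f) (volume.prod volume) := by
    have huncurry : Function.uncurry f
        = Set.indicator (Set.Ici (0:ℝ) ×ˢ (Set.univ : Set ℝ))
            (fun p => gd d b (p.2 - p.1) * gd m a p.2) := by
      ext p
      rw [Function.uncurry, hf_def]
      simp only [Set.indicator_apply, Set.mem_prod, Set.mem_Ici, Set.mem_univ, and_true]
    rw [huncurry]
    exact hG.indicator (measurableSet_Ici.prod MeasurableSet.univ)
  have hswap2 := integral_integral_swap hfint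
  have hlhs : ∀ y : ℝ, (∫ u, f u y)
      = (∫ u in Set.Ici (0:ℝ), gd d b (y - u)) * gd m a y := by
    intro y
    rw [hf_def]
    simp only
    rw [integral_indicator measurableSet_Ici, integral_mul_const]
  have hrhs : ∀ u : ℝ, (∫ y, f u y)
      = Set.indicator (Set.Ici (0:ℝ)) (fun u' => gd (m - d) (a+b) u') u := by
    intro u
    by_cases h : u ∈ Set.Ici (0:ℝ)
    · rw [hf_def]
      simp only [Set.indicator_of_mem h]
      rw [← gd_conv ha hb m d u]
      congr 1; ext y; ring
    · rw [hf_def]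
      simp only [Set.indicator_of_notMem h]
      simp
  calc ∫ y, (∫ u in Set.Ici (0:ℝ), gd d b (y - u)) * gd m a y
      = ∫ y, ∫ u, f u y := by simp_rw [hlhs]
    _ = ∫ u, ∫ y, f u y := hswap2.symm
    _ = ∫ u, Set.indicator (Set.Ici (0:ℝ)) (fun u' => gd (m - d) (a+b) u') u := by
        simp_rw [hrhs]
    _ = ∫ u in Set.Ici (0:ℝ), gd (m - d) (a+b) u := integral_indicator measurableSet_Ici

lemma phiR_comp {s : ℝ} (hs : 0 < s) (d y : ℝ) :
    phiR ((y - d)/s) = s * gd d (s^2) y := by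
  unfold phiR gd
  have h2 : Real.sqrt (2*Real.pi*s^2) = Real.sqrt (2*Real.pi) * s := by
    rw [Real.sqrt_mul (by positivity), Real.sqrt_sq hs.le]
  have h3 : -((y-d)/s)^2/2 = -(y-d)^2/(2*s^2) := by
    field_simp
  rw [h2, h3, mul_inv]
  field_simp

/-- the coupled-bootstrap summand is an unbiased estimator of the
noise-inflated welfare. -/
theorem coupled_bootstrap_unbiased (μ σ K δ ε : ℝ) (hσ : 0 < σ) (hε : 0 < ε) :
    (∫ y, ((y - K) * PhiR ((y - δ) / (ε * σ)) - (σ / ε) * phiR ((y - δ) / (ε * σ)))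
        ∂(gaussianReal μ ((σ ^ 2).toNNReal)))
      = (μ - K) * PhiR ((μ - δ) / (σ * Real.sqrt (1 + ε ^ 2))) := by
  have ha : (0:ℝ) < σ^2 := by positivity
  have hb : (0:ℝ) < (ε*σ)^2 := by positivity
  have hεσ : (0:ℝ) < ε*σ := by positivity
  have hPhimeas : AEStronglyMeasurable (fun y : ℝ => PhiR ((y - δ) / (ε * σ)))
      (volume : Measure ℝ) :=
    (PhiR_measurable.comp (by fun_prop)).aestronglyMeasurable
  have hPhibdd : ∃ C, ∀ y : ℝ, ‖PhiR ((y - δ) / (ε * σ))‖ ≤ C :=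
    ⟨1, fun y => by
      rw [Real.norm_eq_abs, abs_of_nonneg (PhiR_nonneg _)]; exact PhiR_le_one _⟩
  have J1 : Integrable (fun y : ℝ => PhiR ((y - δ) / (ε * σ)) * ((y - μ) * gd μ (σ^2) y)) :=
    (id_gd_integrable μ ha).bdd_mul hPhimeas (ae_of_all _ hPhibdd.choose_spec)
  have J2 : Integrable (fun y : ℝ => PhiR ((y - δ) / (ε * σ)) * gd μ (σ^2) y) :=
    (gd_integrable μ ha.le).bdd_mul hPhimeas (ae_of_all _ hPhibdd.choose_spec)
  have J3 : Integrable (fun y : ℝ => gd δ ((ε*σ)^2) y * gd μ (σ^2) y) :=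
    gd_mul_integrable δ hb (gd_integrable μ ha.le)
      (gd_continuous δ ((ε*σ)^2)).aestronglyMeasurable
  rw [integral_gaussianReal_eq ha μ]
  have hpoint : ∀ y : ℝ,
      gd μ (σ^2) y * ((y - K) * PhiR ((y - δ) / (ε * σ)) - (σ / ε) * phiR ((y - δ) / (ε * σ)))
      = (PhiR ((y - δ) / (ε * σ)) * ((y - μ) * gd μ (σ^2) y)
          + (μ - K) * (PhiR ((y - δ) / (ε * σ)) * gd μ (σ^2) y))
        - σ^2 * (gd δ ((ε*σ)^2) y * gd μ (σ^2) y) := by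
    intro y
    rw [phiR_comp hεσ δ y]
    field_simp
    ring
  have J2' : Integrable (fun y : ℝ => (μ - K) * (PhiR ((y - δ) / (ε * σ)) * gd μ (σ^2) y)) :=
    J2.const_mul (μ - K)
  have J3' : Integrable (fun y : ℝ => σ^2 * (gd δ ((ε*σ)^2) y * gd μ (σ^2) y)) :=
    J3.const_mul (σ^2)
  have J12 : Integrable (fun y : ℝ => PhiR ((y - δ) / (ε * σ)) * ((y - μ) * gd μ (σ^2) y)
      + (μ - K) * (PhiR ((y - δ) / (ε * σ)) * gd μ (σ^2) y)) := J1.add J2'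
  rw [integral_congr_ae (ae_of_all _ hpoint),
    integral_sub J12 J3',
    integral_add J1 J2',
    MeasureTheory.integral_const_mul, MeasureTheory.integral_const_mul]
  have hT1 : ∫ y, PhiR ((y - δ) / (ε * σ)) * ((y - μ) * gd μ (σ^2) y)
      = σ^2 * ∫ z, gd δ ((ε*σ)^2) z * gd μ (σ^2) z := by
    have := fubini_A ha hb μ δ
    rw [← this]
    refine integral_congr_ae (ae_of_all _ fun y => ?_)
    show PhiR ((y - δ) / (ε * σ)) * ((y - μ) * gd μ (σ^2) y) = _
    rw [PhiR_formA δ hεσ y]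
    ring
  have hT2 : ∫ y, PhiR ((y - δ) / (ε * σ)) * gd μ (σ^2) y
      = PhiR ((μ - δ) / (σ * Real.sqrt (1 + ε ^ 2))) := by
    have hfb := fubini_B ha hb μ δ
    have h1 : ∫ y, PhiR ((y - δ) / (ε * σ)) * gd μ (σ^2) y
        = ∫ u in Set.Ici (0:ℝ), gd (μ - δ) (σ^2 + (ε*σ)^2) u := by
      rw [← hfb]
      refine integral_congr_ae (ae_of_all _ fun y => ?_)
      show PhiR ((y - δ) / (ε * σ)) * gd μ (σ^2) y = _
      rw [PhiR_formB δ hεσ y]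
    rw [h1]
    have hst : σ^2 + (ε*σ)^2 = (σ * Real.sqrt (1 + ε^2))^2 := by
      nlinarith [Real.sq_sqrt (show (0:ℝ) ≤ 1 + ε^2 by positivity)]
    have hstpos : (0:ℝ) < σ * Real.sqrt (1 + ε^2) := by positivity
    rw [hst, ← gauss_apply (μ - δ) (by positivity) measurableSet_Ici,
      gauss_Ici (μ - δ) hstpos 0]
    norm_num
  rw [hT1, hT2]
  ring
end

section
/- Let Y ~ N(μ, σ²) and W ~ N(0, σ²) be independent, and let ε > 0. Then the random variables Y₁ = Y + εW and Y₂ = Y − W/ε are independent, with Y₁ ~ N(μ, (1 + ε²)σ²) and Y₂ ~ N(μ, (1 + ε^{−2})σ²). -/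
open MeasureTheory ProbabilityTheory Real
open scoped ENNReal NNReal

namespace CBaux


lemma gaussian_prod (m₁ m₂ : ℝ) {v₁ v₂ : ℝ≥0} (h₁ : v₁ ≠ 0) (h₂ : v₂ ≠ 0) :
    (gaussianReal m₁ v₁).prod (gaussianReal m₂ v₂)
      = (volume : Measure (ℝ × ℝ)).withDensity
          (fun p => gaussianPDF m₁ v₁ p.1 * gaussianPDF m₂ v₂ p.2) := by
  refine Measure.prod_eq (fun s t hs ht => ?_)
  rw [Measure.volume_eq_prod, withDensity_apply _ (hs.prod ht), ← Measure.prod_restrict,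
    lintegral_prod_mul ((measurable_gaussianPDF _ _).aemeasurable)
      ((measurable_gaussianPDF _ _).aemeasurable),
    gaussianReal_of_var_ne_zero _ h₁, gaussianReal_of_var_ne_zero _ h₂,
    withDensity_apply _ hs, withDensity_apply _ ht]

lemma map_withDensity_equiv {α β : Type*} [MeasurableSpace α] [MeasurableSpace β]
    (e : α ≃ᵐ β) (μ : Measure α) {f : α → ℝ≥0∞} (hf : Measurable f) :
    Measure.map e (μ.withDensity f) = (Measure.map e μ).withDensity (fun y => f (e.symm y)) := by
  ext s hs
  rw [Measure.map_apply e.measurable hs, withDensity_apply _ (e.measurable hs),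
    withDensity_apply _ hs]
  rw [setLIntegral_map (f := fun y => f (e.symm y)) hs (hf.comp e.symm.measurable) e.measurable]
  simp



noncomputable def Lmap (ε : ℝ) : (ℝ × ℝ) →ₗ[ℝ] (ℝ × ℝ) where
  toFun p := (p.1 + ε * p.2, p.1 - p.2 / ε)
  map_add' p q := by simp [Prod.ext_iff]; constructor <;> ring
  map_smul' c p := by simp [Prod.ext_iff]; constructor <;> ring

noncomputable def Minv (ε : ℝ) : (ℝ × ℝ) →ₗ[ℝ] (ℝ × ℝ) where
  toFun p := ((p.1 + ε ^ 2 * p.2) / (1 + ε ^ 2), ε * (p.1 - p.2) / (1 + ε ^ 2))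
  map_add' p q := by simp [Prod.ext_iff]; constructor <;> ring
  map_smul' c p := by simp [Prod.ext_iff]; constructor <;> ring

lemma det_Lmap {ε : ℝ} (hε : 0 < ε) : LinearMap.det (Lmap ε) = -(1 + ε ^ 2) / ε := by
  have h := LinearMap.det_toMatrix (Module.Basis.finTwoProd ℝ) (Lmap ε)
  rw [← h, Matrix.det_fin_two]
  simp [LinearMap.toMatrix_apply, Lmap, Module.Basis.finTwoProd]
  field_simp
  ring

noncomputable def Leq {ε : ℝ} (hε : 0 < ε) : (ℝ × ℝ) ≃ₗ[ℝ] (ℝ × ℝ) :=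
  LinearEquiv.ofLinear (Lmap ε) (Minv ε)
    (by
      apply LinearMap.ext; intro p
      have h1 : (1 : ℝ) + ε ^ 2 ≠ 0 := by positivity
      have h2 : ε ≠ 0 := ne_of_gt hε
      simp only [LinearMap.coe_comp, Function.comp_apply, LinearMap.id_coe, id_eq,
        Lmap, Minv, LinearMap.coe_mk, AddHom.coe_mk, Prod.ext_iff]
      constructor <;> field_simp <;> ring)
    (by
      apply LinearMap.ext; intro p
      have h1 : (1 : ℝ) + ε ^ 2 ≠ 0 := by positivity
      have h2 : ε ≠ 0 := ne_of_gt hε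
      simp only [LinearMap.coe_comp, Function.comp_apply, LinearMap.id_coe, id_eq,
        Lmap, Minv, LinearMap.coe_mk, AddHom.coe_mk, Prod.ext_iff]
      constructor <;> field_simp <;> ring)

noncomputable def Lme {ε : ℝ} (hε : 0 < ε) : (ℝ × ℝ) ≃ᵐ (ℝ × ℝ) :=
  (Leq hε).toContinuousLinearEquiv.toHomeomorph.toMeasurableEquiv

lemma Lme_apply {ε : ℝ} (hε : 0 < ε) (p : ℝ × ℝ) :
    Lme hε p = (p.1 + ε * p.2, p.1 - p.2 / ε) := rfl

lemma Lme_symm_apply {ε : ℝ} (hε : 0 < ε) (p : ℝ × ℝ) :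
    (Lme hε).symm p = ((p.1 + ε ^ 2 * p.2) / (1 + ε ^ 2), ε * (p.1 - p.2) / (1 + ε ^ 2)) := rfl

lemma map_vol {ε : ℝ} (hε : 0 < ε) :
    Measure.map (Lme hε) (volume : Measure (ℝ × ℝ))
      = ENNReal.ofReal (ε / (1 + ε ^ 2)) • (volume : Measure (ℝ × ℝ)) := by
  have hd : LinearMap.det (Lmap ε) ≠ 0 := by
    rw [det_Lmap hε]
    have h1 : (1 : ℝ) + ε ^ 2 > 0 := by positivity
    intro h
    rw [div_eq_zero_iff] at h
    rcases h with h | h <;> nlinarith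
  have := Measure.map_linearMap_addHaar_eq_smul_addHaar (volume : Measure (ℝ × ℝ)) hd
  have hco : ⇑(Lmap ε) = ⇑(Lme hε) := rfl
  rw [hco] at this
  rw [this, det_Lmap hε]
  congr 1
  have h1 : (0:ℝ) < 1 + ε ^ 2 := by positivity
  have : (-(1 + ε ^ 2) / ε)⁻¹ = -(ε / (1 + ε ^ 2)) := by
    rw [inv_div, div_neg]
  rw [this, abs_neg, abs_of_nonneg (by positivity)]



lemma real_density (m σ ε a b : ℝ) (hσ : 0 < σ) (hε : 0 < ε) :
    (ε / (1 + ε ^ 2)) *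
      (gaussianPDFReal m (σ ^ 2).toNNReal ((a + ε ^ 2 * b) / (1 + ε ^ 2)) *
        gaussianPDFReal 0 (σ ^ 2).toNNReal (ε * (a - b) / (1 + ε ^ 2)))
    = gaussianPDFReal m ((1 + ε ^ 2) * σ ^ 2).toNNReal a *
        gaussianPDFReal m ((1 + ε⁻¹ ^ 2) * σ ^ 2).toNNReal b := by
  have hq : (0:ℝ) < 1 + ε ^ 2 := by positivity
  have hq' : (0:ℝ) < 1 + ε⁻¹ ^ 2 := by positivity
  have h1 : ((σ ^ 2).toNNReal : ℝ) = σ ^ 2 := Real.coe_toNNReal _ (by positivity)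
  have h2 : (((1 + ε ^ 2) * σ ^ 2).toNNReal : ℝ) = (1 + ε ^ 2) * σ ^ 2 :=
    Real.coe_toNNReal _ (by positivity)
  have h3 : (((1 + ε⁻¹ ^ 2) * σ ^ 2).toNNReal : ℝ) = (1 + ε⁻¹ ^ 2) * σ ^ 2 :=
    Real.coe_toNNReal _ (by positivity)
  simp only [gaussianPDFReal, h1, h2, h3]
  have hA : (0:ℝ) < √(2 * π * σ ^ 2) := by
    apply Real.sqrt_pos.mpr; positivity
  -- normalizer identity
  have hs1 : √(2 * π * ((1 + ε ^ 2) * σ ^ 2)) = √(1 + ε ^ 2) * √(2 * π * σ ^ 2) := by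
    rw [← Real.sqrt_mul (le_of_lt hq)]; ring_nf
  have hs2 : √(2 * π * ((1 + ε⁻¹ ^ 2) * σ ^ 2)) = √(1 + ε⁻¹ ^ 2) * √(2 * π * σ ^ 2) := by
    rw [← Real.sqrt_mul (le_of_lt hq')]; ring_nf
  have hs3 : √(1 + ε ^ 2) * √(1 + ε⁻¹ ^ 2) = (1 + ε ^ 2) / ε := by
    rw [← Real.sqrt_mul (le_of_lt hq)]
    have : (1 + ε ^ 2) * (1 + ε⁻¹ ^ 2) = ((1 + ε ^ 2) / ε) ^ 2 := by
      field_simp; ring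
    rw [this, Real.sqrt_sq (by positivity)]
  have hnorm : (ε / (1 + ε ^ 2)) * ((√(2 * π * σ ^ 2))⁻¹ * (√(2 * π * σ ^ 2))⁻¹)
      = (√(2 * π * ((1 + ε ^ 2) * σ ^ 2)))⁻¹ * (√(2 * π * ((1 + ε⁻¹ ^ 2) * σ ^ 2)))⁻¹ := by
    rw [hs1, hs2, mul_inv, mul_inv, mul_mul_mul_comm, ← mul_inv, ← mul_inv, hs3, inv_div]
  -- exponent identity
  have hexp : -((a + ε ^ 2 * b) / (1 + ε ^ 2) - m) ^ 2 / (2 * σ ^ 2)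
        + -(ε * (a - b) / (1 + ε ^ 2) - 0) ^ 2 / (2 * σ ^ 2)
      = -(a - m) ^ 2 / (2 * ((1 + ε ^ 2) * σ ^ 2))
        + -(b - m) ^ 2 / (2 * ((1 + ε⁻¹ ^ 2) * σ ^ 2)) := by
    have hσ0 : σ ≠ 0 := ne_of_gt hσ
    have hε0 : ε ≠ 0 := ne_of_gt hε
    have hq0 : (1:ℝ) + ε ^ 2 ≠ 0 := ne_of_gt hq
    have hq0' : (1:ℝ) + ε⁻¹ ^ 2 ≠ 0 := ne_of_gt hq'
    field_simp
    ring
  calc (ε / (1 + ε ^ 2)) *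
      ((√(2 * π * σ ^ 2))⁻¹ * rexp (-((a + ε ^ 2 * b) / (1 + ε ^ 2) - m) ^ 2 / (2 * σ ^ 2)) *
        ((√(2 * π * σ ^ 2))⁻¹ * rexp (-(ε * (a - b) / (1 + ε ^ 2) - 0) ^ 2 / (2 * σ ^ 2))))
      = ((ε / (1 + ε ^ 2)) * ((√(2 * π * σ ^ 2))⁻¹ * (√(2 * π * σ ^ 2))⁻¹)) *
          rexp (-((a + ε ^ 2 * b) / (1 + ε ^ 2) - m) ^ 2 / (2 * σ ^ 2)
            + -(ε * (a - b) / (1 + ε ^ 2) - 0) ^ 2 / (2 * σ ^ 2)) := by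
        rw [Real.exp_add]; ring
    _ = ((√(2 * π * ((1 + ε ^ 2) * σ ^ 2)))⁻¹ * (√(2 * π * ((1 + ε⁻¹ ^ 2) * σ ^ 2)))⁻¹) *
          rexp (-(a - m) ^ 2 / (2 * ((1 + ε ^ 2) * σ ^ 2))
            + -(b - m) ^ 2 / (2 * ((1 + ε⁻¹ ^ 2) * σ ^ 2))) := by rw [hnorm, hexp]
    _ = _ := by rw [Real.exp_add]; ring


lemma key_map (m σ ε : ℝ) (hσ : 0 < σ) (hε : 0 < ε) :
    Measure.map (fun p : ℝ × ℝ => (p.1 + ε * p.2, p.1 - p.2 / ε))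
      ((gaussianReal m ((σ ^ 2).toNNReal)).prod (gaussianReal 0 ((σ ^ 2).toNNReal)))
    = (gaussianReal m (((1 + ε ^ 2) * σ ^ 2).toNNReal)).prod
        (gaussianReal m (((1 + ε⁻¹ ^ 2) * σ ^ 2).toNNReal)) := by
  have hv : (σ ^ 2).toNNReal ≠ 0 := by
    simp only [ne_eq, Real.toNNReal_eq_zero, not_le]; positivity
  have hv1 : ((1 + ε ^ 2) * σ ^ 2).toNNReal ≠ 0 := by
    simp only [ne_eq, Real.toNNReal_eq_zero, not_le]; positivity
  have hv2 : ((1 + ε⁻¹ ^ 2) * σ ^ 2).toNNReal ≠ 0 := by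
    simp only [ne_eq, Real.toNNReal_eq_zero, not_le]; positivity
  rw [gaussian_prod _ _ hv hv, gaussian_prod _ _ hv1 hv2]
  have hco : (fun p : ℝ × ℝ => (p.1 + ε * p.2, p.1 - p.2 / ε)) = ⇑(Lme hε) := rfl
  have hdmeas : Measurable (fun p : ℝ × ℝ =>
      gaussianPDF m ((σ ^ 2).toNNReal) p.1 * gaussianPDF 0 ((σ ^ 2).toNNReal) p.2) :=
    ((measurable_gaussianPDF _ _).comp measurable_fst).mul
      ((measurable_gaussianPDF _ _).comp measurable_snd)
  rw [hco, map_withDensity_equiv (Lme hε) _ hdmeas, map_vol hε,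
    withDensity_smul_measure, ← withDensity_smul' _ _ ENNReal.ofReal_ne_top]
  congr 1
  funext p
  have hsymm := Lme_symm_apply hε p
  simp only [Pi.smul_apply, smul_eq_mul, hsymm]
  rw [gaussianPDF, gaussianPDF, gaussianPDF, gaussianPDF,
    ← ENNReal.ofReal_mul (gaussianPDFReal_nonneg _ _ _),
    ← ENNReal.ofReal_mul (by positivity),
    ← ENNReal.ofReal_mul (gaussianPDFReal_nonneg _ _ _)]
  exact congrArg ENNReal.ofReal (real_density m σ ε p.1 p.2 hσ hε)

end CBaux

/-- the coupled-bootstrap construction: `Y + εW` and `Y − W/ε` are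
independent Gaussians with the stated laws. -/
theorem coupled_bootstrap_independence {Ω : Type*} [MeasurableSpace Ω]
    (P : Measure Ω) [IsProbabilityMeasure P]
    (μ σ ε : ℝ) (hσ : 0 < σ) (hε : 0 < ε)
    (Y W : Ω → ℝ) (hY : Measurable Y) (hW : Measurable W)
    (hYlaw : Measure.map Y P = gaussianReal μ ((σ ^ 2).toNNReal))
    (hWlaw : Measure.map W P = gaussianReal 0 ((σ ^ 2).toNNReal))
    (hindep : IndepFun Y W P) :
    IndepFun (fun ω => Y ω + ε * W ω) (fun ω => Y ω - W ω / ε) P ∧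
    Measure.map (fun ω => Y ω + ε * W ω) P
      = gaussianReal μ (((1 + ε ^ 2) * σ ^ 2).toNNReal) ∧
    Measure.map (fun ω => Y ω - W ω / ε) P
      = gaussianReal μ (((1 + (ε⁻¹) ^ 2) * σ ^ 2).toNNReal) := by
  have hmeas1 : Measurable fun ω => Y ω + ε * W ω := hY.add (hW.const_mul ε)
  have hmeas2 : Measurable fun ω => Y ω - W ω / ε := hY.sub (hW.div_const ε)
  have hLmeas : Measurable (fun p : ℝ × ℝ => (p.1 + ε * p.2, p.1 - p.2 / ε)) :=
    (measurable_fst.add (measurable_snd.const_mul ε)).prodMk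
      (measurable_fst.sub (measurable_snd.div_const ε))
  have hpairYW : Measure.map (fun ω => (Y ω, W ω)) P
      = (gaussianReal μ ((σ ^ 2).toNNReal)).prod (gaussianReal 0 ((σ ^ 2).toNNReal)) := by
    rw [← hYlaw, ← hWlaw]
    exact (indepFun_iff_map_prod_eq_prod_map_map hY.aemeasurable hW.aemeasurable).mp hindep
  have hcomp : Measure.map (fun ω => (Y ω + ε * W ω, Y ω - W ω / ε)) P
      = (gaussianReal μ (((1 + ε ^ 2) * σ ^ 2).toNNReal)).prod
          (gaussianReal μ (((1 + ε⁻¹ ^ 2) * σ ^ 2).toNNReal)) := by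
    calc Measure.map (fun ω => (Y ω + ε * W ω, Y ω - W ω / ε)) P
        = Measure.map ((fun p : ℝ × ℝ => (p.1 + ε * p.2, p.1 - p.2 / ε))
            ∘ (fun ω => (Y ω, W ω))) P := rfl
      _ = Measure.map (fun p : ℝ × ℝ => (p.1 + ε * p.2, p.1 - p.2 / ε))
            (Measure.map (fun ω => (Y ω, W ω)) P) :=
          (Measure.map_map hLmeas (hY.prodMk hW)).symm
      _ = _ := by rw [hpairYW, CBaux.key_map μ σ ε hσ hε]
  have hm1 : Measure.map (fun ω => Y ω + ε * W ω) P
      = gaussianReal μ (((1 + ε ^ 2) * σ ^ 2).toNNReal) := by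
    have h : (fun ω => Y ω + ε * W ω)
        = Prod.fst ∘ (fun ω => (Y ω + ε * W ω, Y ω - W ω / ε)) := rfl
    rw [h, ← Measure.map_map measurable_fst (hmeas1.prodMk hmeas2), hcomp,
      Measure.map_fst_prod]
    simp
  have hm2 : Measure.map (fun ω => Y ω - W ω / ε) P
      = gaussianReal μ (((1 + (ε⁻¹) ^ 2) * σ ^ 2).toNNReal) := by
    have h : (fun ω => Y ω - W ω / ε)
        = Prod.snd ∘ (fun ω => (Y ω + ε * W ω, Y ω - W ω / ε)) := rfl
    rw [h, ← Measure.map_map measurable_snd (hmeas1.prodMk hmeas2), hcomp,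
      Measure.map_snd_prod]
    simp
  refine ⟨?_, hm1, hm2⟩
  rw [indepFun_iff_map_prod_eq_prod_map_map hmeas1.aemeasurable hmeas2.aemeasurable,
    hcomp, hm1, hm2]
end
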